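/- For every integer n ≥ 3, 2 · ∑_T B(T) = (n − 1) · C_{n−2}, the sum ranging over all triangulations T of P_n; equivalently, the expected value of B under a uniformly random triangulation of P_n is (n−1)/2. -/

import Mathlib

open Finset
open scoped Classical

/-- `IsDiag l r i j` : the pair `{i, j}` (written with `i < j`) is a diagonal of the
convex sub-polygon on vertices `{l, …, r}`. -/
def IsDiag (l r i j : ℕ) : Prop :=
  l ≤ i ∧ i + 2 ≤ j ∧ j ≤ r ∧ ¬(i = l ∧ j = r)

/-- Two diagonals `{a, b}` and `{c, d}` (written with `a < b`, `c < d`) cross. -/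
def Crosses (a b c d : ℕ) : Prop :=
  (a < c ∧ c < b ∧ b < d) ∨ (c < a ∧ a < d ∧ d < b)

/-- All diagonals of the sub-polygon on `{l, …, r}`, as ordered pairs. -/
noncomputable def allDiags (l r : ℕ) : Finset (ℕ × ℕ) :=
  (range (r + 1) ×ˢ range (r + 1)).filter fun p => IsDiag l r p.1 p.2

/-- The triangulations of the sub-polygon on `{l, …, r}` : sets of `r - l - 2`
pairwise noncrossing diagonals. -/
noncomputable def triangulations (l r : ℕ) : Finset (Finset (ℕ × ℕ)) :=
  (allDiags l r).powerset.filter fun T =>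
    T.card = r - l - 2 ∧ ∀ d ∈ T, ∀ e ∈ T, ¬ Crosses d.1 d.2 e.1 e.2

/-- `IsEdge l r i j` : the pair `{i, j}` (with `i < j`) is an edge (boundary side) of the
sub-polygon on `{l, …, r}`. -/
def IsEdge (l r i j : ℕ) : Prop :=
  (l ≤ i ∧ j = i + 1 ∧ j ≤ r) ∨ (i = l ∧ j = r)

/-- `{i, j}` is a side available in the triangulation `T` (an edge of the polygon or a
diagonal of `T`). -/
def IsSide (l r : ℕ) (T : Finset (ℕ × ℕ)) (i j : ℕ) : Prop :=
  IsEdge l r i j ∨ (i, j) ∈ T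

/-- The triangles of a triangulation `T` of the sub-polygon on `{l, …, r}`, as ordered
triples `(a, b, c)` with `a < b < c`, each of whose three sides is an edge or a diagonal
of `T`. -/
noncomputable def triangles (l r : ℕ) (T : Finset (ℕ × ℕ)) : Finset (ℕ × ℕ × ℕ) :=
  (range (r + 1) ×ˢ range (r + 1) ×ˢ range (r + 1)).filter fun t =>
    t.1 < t.2.1 ∧ t.2.1 < t.2.2 ∧
      IsSide l r T t.1 t.2.1 ∧ IsSide l r T t.2.1 t.2.2 ∧ IsSide l r T t.1 t.2.2

/-- The number of sides of the triangle `{a, b, c}` (with `a < b < c`) that are edges of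
the sub-polygon on `{l, …, r}`. -/
noncomputable def edgeCount (l r a b c : ℕ) : ℕ :=
  (if IsEdge l r a b then 1 else 0) + (if IsEdge l r b c then 1 else 0) +
    (if IsEdge l r a c then 1 else 0)

/-- `O(T)` : the number of triangles of `T` with exactly one side an edge of `P_n`. -/
noncomputable def oneSideCount (n : ℕ) (T : Finset (ℕ × ℕ)) : ℕ :=
  ((triangles 1 n T).filter fun t => edgeCount 1 n t.1 t.2.1 t.2.2 = 1).card

/-- `Ear(T)` : the number of triangles of `T` with at least two sides edges of `P_n`. -/
noncomputable def earCount (n : ℕ) (T : Finset (ℕ × ℕ)) : ℕ :=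
  ((triangles 1 n T).filter fun t => 2 ≤ edgeCount 1 n t.1 t.2.1 t.2.2).card

/-- `D(T)` : the number of triangles of `T` containing vertex `1`. -/
noncomputable def degOne (n : ℕ) (T : Finset (ℕ × ℕ)) : ℕ :=
  ((triangles 1 n T).filter fun t => t.1 = 1 ∨ t.2.1 = 1 ∨ t.2.2 = 1).card

/-- `B(T)` : the number of triangles `{l, j, r}` of `T` (with `l < j < r`) such that
`j - l = 1`. -/
noncomputable def blueCount (n : ℕ) (T : Finset (ℕ × ℕ)) : ℕ :=
  ((triangles 1 n T).filter fun t => t.2.1 - t.1 = 1).card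

/-- `A_i(T)` : the number of triangles `{1, a, b}` of `T` containing vertex `1`
(written with `1 < a < b`) such that `b - a = i`. -/
noncomputable def angleCount (n : ℕ) (T : Finset (ℕ × ℕ)) (i : ℕ) : ℕ :=
  ((triangles 1 n T).filter fun t => t.1 = 1 ∧ t.2.2 - t.2.1 = i).card

-- ===== auxiliary lemmas =====

lemma mem_allDiags {l r : ℕ} {p : ℕ × ℕ} :
    p ∈ allDiags l r ↔ IsDiag l r p.1 p.2 := by
  unfold allDiags
  simp only [mem_filter, mem_product, mem_range, and_iff_right_iff_imp]
  intro h
  obtain ⟨h1, h2, h3, h4⟩ := h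
  omega

lemma mem_triangulations {l r : ℕ} {T : Finset (ℕ × ℕ)} :
    T ∈ triangulations l r ↔ T ⊆ allDiags l r ∧ T.card = r - l - 2 ∧
      ∀ d ∈ T, ∀ e ∈ T, ¬ Crosses d.1 d.2 e.1 e.2 := by
  unfold triangulations
  simp only [mem_filter, mem_powerset]


lemma mem_triangles {l r : ℕ} {T : Finset (ℕ × ℕ)} {t : ℕ × ℕ × ℕ} :
    t ∈ triangles l r T ↔ t.1 < r + 1 ∧ t.2.1 < r + 1 ∧ t.2.2 < r + 1 ∧
      t.1 < t.2.1 ∧ t.2.1 < t.2.2 ∧ IsSide l r T t.1 t.2.1 ∧ IsSide l r T t.2.1 t.2.2 ∧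
      IsSide l r T t.1 t.2.2 := by
  unfold triangles
  simp only [mem_filter, mem_product, mem_range]
  tauto

lemma allDiags_eq_empty {l r : ℕ} (h : r ≤ l + 2) : allDiags l r = ∅ := by
  ext p
  simp only [mem_allDiags, IsDiag, notMem_empty, iff_false]
  omega

lemma crosses_symm {a b c d : ℕ} : Crosses a b c d ↔ Crosses c d a b := or_comm

lemma noncross_card_le : ∀ k l r (D : Finset (ℕ × ℕ)), r - l ≤ k →
    D ⊆ allDiags l r → (∀ d ∈ D, ∀ e ∈ D, ¬ Crosses d.1 d.2 e.1 e.2) →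
    D.card ≤ r - l - 2 := by
  intro k
  induction k using Nat.strong_induction_on with
  | _ k ih =>
  intro l r D hk hD hX
  by_cases hlr : r ≤ l + 2
  · have hDe : D = ∅ := subset_empty.mp (by rw [← allDiags_eq_empty hlr]; exact hD)
    simp [hDe]
  push_neg at hlr
  by_cases hl : ∃ p ∈ D, p.1 = l
  · -- there is a diagonal from l; take the longest one
    obtain ⟨p0, hp0, hp0l⟩ := hl
    set S := (D.filter (fun p => p.1 = l)).image Prod.snd with hS
    have hSne : S.Nonempty := ⟨p0.2, mem_image.mpr ⟨p0, mem_filter.mpr ⟨hp0, hp0l⟩, rfl⟩⟩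
    set b := S.max' hSne with hbdef
    have hbD : (l, b) ∈ D := by
      obtain ⟨p, hp, hps⟩ := mem_image.mp (S.max'_mem hSne)
      have h1 := (mem_filter.mp hp).2
      have h2 := (mem_filter.mp hp).1
      have : p = (l, b) := by
        rw [Prod.ext_iff]; exact ⟨h1, hps⟩
      rwa [← this]
    have hbmax : ∀ p ∈ D, p.1 = l → p.2 ≤ b :=
      fun p hp h => S.le_max' _ (mem_image.mpr ⟨p, mem_filter.mpr ⟨hp, h⟩, rfl⟩)
    have hbdiag : IsDiag l r l b := by
      have := mem_allDiags.mp (hD hbD); exact this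
    have hb2 : l + 2 ≤ b ∧ b < r := by unfold IsDiag at hbdiag; omega
    set D1 := D.filter (fun p => p.2 ≤ b ∧ p ≠ (l, b)) with hD1
    set D2 := D.filter (fun p => b ≤ p.1 ∧ p ≠ (b, r)) with hD2
    have hmem12 : ∀ p ∈ D, p ≠ (l, b) → p ≠ (b, r) → p ∈ D1 ∪ D2 := by
      intro p hp h1 h2
      have hpd : IsDiag l r p.1 p.2 := mem_allDiags.mp (hD hp)
      have hnc := hX p hp (l, b) hbD
      have hkey : p.2 ≤ b ∨ b ≤ p.1 := by
        by_cases hc : p.1 = l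
        · left; exact hbmax p hp hc
        · unfold Crosses at hnc
          unfold IsDiag at hpd
          omega
      rcases hkey with hkey | hkey
      · exact mem_union_left _ (mem_filter.mpr ⟨hp, hkey, h1⟩)
      · exact mem_union_right _ (mem_filter.mpr ⟨hp, hkey, h2⟩)
    have hsub1 : D1 ⊆ allDiags l b := by
      intro p hp
      rw [hD1, mem_filter] at hp
      obtain ⟨hp, hpb, hpne⟩ := hp
      have hpd : IsDiag l r p.1 p.2 := mem_allDiags.mp (hD hp)
      rw [mem_allDiags]
      have : ¬(p.1 = l ∧ p.2 = b) := by
        intro h; exact hpne (Prod.ext_iff.mpr h)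
      unfold IsDiag at hpd ⊢
      omega
    have hsub2 : D2 ⊆ allDiags b r := by
      intro p hp
      rw [hD2, mem_filter] at hp
      obtain ⟨hp, hpb, hpne⟩ := hp
      have hpd : IsDiag l r p.1 p.2 := mem_allDiags.mp (hD hp)
      rw [mem_allDiags]
      have : ¬(p.1 = b ∧ p.2 = r) := by
        intro h; exact hpne (Prod.ext_iff.mpr h)
      unfold IsDiag at hpd ⊢
      omega
    have hX1 : ∀ d ∈ D1, ∀ e ∈ D1, ¬ Crosses d.1 d.2 e.1 e.2 :=
      fun d hd e he => hX d (filter_subset _ _ hd) e (filter_subset _ _ he)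
    have hX2 : ∀ d ∈ D2, ∀ e ∈ D2, ¬ Crosses d.1 d.2 e.1 e.2 :=
      fun d hd e he => hX d (filter_subset _ _ hd) e (filter_subset _ _ he)
    have hc1 : D1.card ≤ b - l - 2 := ih (b - l) (by omega) l b D1 (le_refl _) hsub1 hX1
    have hc2 : D2.card ≤ r - b - 2 := ih (r - b) (by omega) b r D2 (le_refl _) hsub2 hX2
    have hcu : (D1 ∪ D2).card ≤ D1.card + D2.card := card_union_le _ _
    by_cases hbr : (b, r) ∈ D
    · have hbr2 : b + 2 ≤ r := by
        have : IsDiag l r b r := mem_allDiags.mp (hD hbr)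
        unfold IsDiag at this; omega
      have hcov : D ⊆ insert (l, b) (insert (b, r) (D1 ∪ D2)) := by
        intro p hp
        by_cases h1 : p = (l, b); · simp [h1]
        by_cases h2 : p = (b, r); · simp [h2]
        exact mem_insert_of_mem (mem_insert_of_mem (hmem12 p hp h1 h2))
      have := card_le_card hcov
      have := card_insert_le (l, b) (insert (b, r) (D1 ∪ D2))
      have := card_insert_le (b, r) (D1 ∪ D2)
      omega
    · have hcov : D ⊆ insert (l, b) (D1 ∪ D2) := by
        intro p hp
        by_cases h1 : p = (l, b); · simp [h1]
        by_cases h2 : p = (b, r); · exact absurd (h2 ▸ hp) hbr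
        exact mem_insert_of_mem (hmem12 p hp h1 h2)
      have := card_le_card hcov
      have := card_insert_le (l, b) (D1 ∪ D2)
      omega
  · -- no diagonal from l
    push_neg at hl
    set D' := D.filter (fun p => p ≠ (l + 1, r)) with hD'
    have hsub : D' ⊆ allDiags (l + 1) r := by
      intro p hp
      rw [hD', mem_filter] at hp
      have h1 : IsDiag l r p.1 p.2 := mem_allDiags.mp (hD hp.1)
      have h2 : p.1 ≠ l := hl p hp.1
      have h3 : ¬(p.1 = l + 1 ∧ p.2 = r) := by
        intro h; exact hp.2 (Prod.ext_iff.mpr h)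
      rw [mem_allDiags]
      unfold IsDiag at h1 ⊢
      omega
    have hcard : D'.card ≤ r - (l + 1) - 2 := by
      refine ih (r - (l + 1)) (by omega) (l + 1) r D' (le_refl _) hsub ?_
      exact fun d hd e he => hX d (filter_subset _ _ hd) e (filter_subset _ _ he)
    have hcov : D ⊆ insert (l + 1, r) D' := by
      intro p hp
      by_cases h : p = (l + 1, r)
      · simp [h]
      · exact mem_insert_of_mem (mem_filter.mpr ⟨hp, h⟩)
    have := card_le_card hcov
    have := card_insert_le (l + 1, r) D'
    omega

lemma crosses_of_not_mem {l r : ℕ} {T : Finset (ℕ × ℕ)} (hT : T ∈ triangulations l r)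
    {d : ℕ × ℕ} (hd : d ∈ allDiags l r) (hdT : d ∉ T) :
    ∃ e ∈ T, Crosses d.1 d.2 e.1 e.2 := by
  by_contra h
  push_neg at h
  obtain ⟨hsub, hcard, hX⟩ := mem_triangulations.mp hT
  have hins : insert d T ⊆ allDiags l r := insert_subset hd hsub
  have hX' : ∀ a ∈ insert d T, ∀ e ∈ insert d T, ¬ Crosses a.1 a.2 e.1 e.2 := by
    intro a ha e he
    rcases mem_insert.mp ha with ha1 | ha1 <;> rcases mem_insert.mp he with he1 | he1
    · rw [ha1, he1]
      unfold Crosses; omega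
    · rw [ha1]; exact h e he1
    · rw [he1]
      intro hc
      exact h a ha1 (crosses_symm.mp hc)
    · exact hX a ha1 e he1
  have hle := noncross_card_le (r - l) l r (insert d T) (le_refl _) hins hX'
  have : (insert d T).card = T.card + 1 := card_insert_of_notMem hdT
  have hrl : l + 2 ≤ r := by
    have := mem_allDiags.mp hd
    unfold IsDiag at this; omega
  omega

lemma ear_exists {l r : ℕ} {T : Finset (ℕ × ℕ)} (hT : T ∈ triangulations l r)
    (h2 : l + 2 ≤ r) :
    ∃ j, l < j ∧ j < r ∧ IsSide l r T l j ∧ IsSide l r T j r := by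
  obtain ⟨hsub, hcard, hX⟩ := mem_triangulations.mp hT
  set S := (Ioo l r).filter (fun j => IsSide l r T l j) with hS
  have hne : S.Nonempty := by
    refine ⟨l + 1, mem_filter.mpr ⟨mem_Ioo.mpr ⟨by omega, by omega⟩, ?_⟩⟩
    exact Or.inl (Or.inl ⟨le_refl l, rfl, by omega⟩)
  set j := S.max' hne with hj
  have hjS : j ∈ S := S.max'_mem hne
  obtain ⟨hIoo, hside⟩ := mem_filter.mp hjS
  obtain ⟨hlj, hjr⟩ := mem_Ioo.mp hIoo
  refine ⟨j, hlj, hjr, hside, ?_⟩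
  by_cases hj1 : j + 1 = r
  · exact Or.inl (Or.inl ⟨le_of_lt hlj, hj1.symm, by omega⟩)
  · have hdiag : (j, r) ∈ allDiags l r := by
      rw [mem_allDiags]
      exact ⟨by omega, by omega, le_refl r, by omega⟩
    by_cases hmem : (j, r) ∈ T
    · exact Or.inr hmem
    exfalso
    obtain ⟨e, heT, hcr⟩ := crosses_of_not_mem hT hdiag hmem
    have hed : IsDiag l r e.1 e.2 := mem_allDiags.mp (hsub heT)
    have h1 : e.1 < j ∧ j < e.2 ∧ e.2 < r := by
      unfold Crosses at hcr; unfold IsDiag at hed; omega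
    have hel : e.1 = l := by
      rcases hside with hE | hmemlj
      · unfold IsEdge at hE
        unfold IsDiag at hed
        omega
      · have hnc := hX (l, j) hmemlj e heT
        unfold Crosses at hnc
        unfold IsDiag at hed
        omega
    have hmem2 : (l, e.2) ∈ T := by
      have : e = (l, e.2) := Prod.ext_iff.mpr ⟨hel, rfl⟩
      rwa [← this]
    have : e.2 ∈ S := mem_filter.mpr ⟨mem_Ioo.mpr ⟨by omega, h1.2.2⟩, Or.inr hmem2⟩
    have := S.le_max' _ this
    omega

lemma ear_unique {l r : ℕ} {T : Finset (ℕ × ℕ)} (hT : T ∈ triangulations l r)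
    {j j' : ℕ} (h1 : l < j) (h2 : j < r) (h3 : IsSide l r T l j) (h4 : IsSide l r T j r)
    (h1' : l < j') (h2' : j' < r) (h3' : IsSide l r T l j') (h4' : IsSide l r T j' r) :
    j = j' := by
  obtain ⟨hsub, hcard, hX⟩ := mem_triangulations.mp hT
  by_contra hne
  wlog hlt : j < j' generalizing j j'
  · exact this h1' h2' h3' h4' h1 h2 h3 h4 (Ne.symm hne) (by omega)
  have hjr : (j, r) ∈ T := by
    rcases h4 with hE | h
    · exfalso; unfold IsEdge at hE; omega
    · exact h
  have hlj' : (l, j') ∈ T := by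
    rcases h3' with hE | h
    · exfalso; unfold IsEdge at hE; omega
    · exact h
  have := hX (l, j') hlj' (j, r) hjr
  unfold Crosses at this
  omega

noncomputable def glue (l j r : ℕ) (T₁ T₂ : Finset (ℕ × ℕ)) : Finset (ℕ × ℕ) :=
  (T₁ ∪ T₂) ∪ ((if l + 2 ≤ j then {(l, j)} else ∅) ∪ (if j + 2 ≤ r then {(j, r)} else ∅))

lemma mem_glue {l j r : ℕ} {T₁ T₂ : Finset (ℕ × ℕ)} {p : ℕ × ℕ} :
    p ∈ glue l j r T₁ T₂ ↔
      p ∈ T₁ ∨ p ∈ T₂ ∨ (l + 2 ≤ j ∧ p = (l, j)) ∨ (j + 2 ≤ r ∧ p = (j, r)) := by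
  unfold glue
  by_cases h1 : l + 2 ≤ j <;> by_cases h2 : j + 2 ≤ r <;>
    simp [h1, h2, mem_union, or_assoc] <;> tauto

lemma glue_subset {l j r : ℕ} {T₁ T₂ : Finset (ℕ × ℕ)} (hj1 : l < j) (hj2 : j < r)
    (h1 : T₁ ⊆ allDiags l j) (h2 : T₂ ⊆ allDiags j r) :
    glue l j r T₁ T₂ ⊆ allDiags l r := by
  intro p hp
  rw [mem_allDiags]
  rcases mem_glue.mp hp with h | h | h | h
  · have := mem_allDiags.mp (h1 h); unfold IsDiag at this ⊢; omega
  · have := mem_allDiags.mp (h2 h); unfold IsDiag at this ⊢; omega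
  · obtain ⟨hle, rfl⟩ := h; unfold IsDiag; omega
  · obtain ⟨hle, rfl⟩ := h; unfold IsDiag; omega

lemma glue_card {l j r : ℕ} {T₁ T₂ : Finset (ℕ × ℕ)} (hj1 : l < j) (hj2 : j < r)
    (h1 : T₁ ⊆ allDiags l j) (h2 : T₂ ⊆ allDiags j r) :
    (glue l j r T₁ T₂).card =
      T₁.card + T₂.card + (if l + 2 ≤ j then 1 else 0) + (if j + 2 ≤ r then 1 else 0) := by
  have hb1 : ∀ p ∈ T₁, l ≤ p.1 ∧ p.1 + 2 ≤ p.2 ∧ p.2 ≤ j ∧ ¬(p.1 = l ∧ p.2 = j) :=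
    fun p hp => mem_allDiags.mp (h1 hp)
  have hb2 : ∀ p ∈ T₂, j ≤ p.1 ∧ p.1 + 2 ≤ p.2 ∧ p.2 ≤ r ∧ ¬(p.1 = j ∧ p.2 = r) :=
    fun p hp => mem_allDiags.mp (h2 hp)
  have hd12 : Disjoint T₁ T₂ := by
    rw [disjoint_left]
    intro p hp1 hp2
    have := hb1 p hp1; have := hb2 p hp2; omega
  have hcu : (T₁ ∪ T₂).card = T₁.card + T₂.card := card_union_of_disjoint hd12
  have hlj : (l, j) ∉ T₁ ∪ T₂ := by
    rw [mem_union]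
    rintro (h | h)
    · have := hb1 _ h; simp at this
    · have := hb2 _ h; simp at this; omega
  have hjr : (j, r) ∉ T₁ ∪ T₂ := by
    rw [mem_union]
    rintro (h | h)
    · have := hb1 _ h; simp at this; omega
    · have := hb2 _ h; simp at this
  by_cases hA : l + 2 ≤ j <;> by_cases hB : j + 2 ≤ r
  · have hne : ((l, j) : ℕ × ℕ) ≠ (j, r) := by
      simp only [ne_eq, Prod.mk.injEq, not_and]; omega
    have hgl : glue l j r T₁ T₂ = (T₁ ∪ T₂) ∪ ({(l, j)} ∪ {(j, r)}) := by
      simp [glue, hA, hB]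
    have hins : ({(l, j)} ∪ {(j, r)} : Finset (ℕ × ℕ)) = insert (l, j) {(j, r)} := by
      rw [insert_eq]
    rw [hgl, hins, card_union_of_disjoint, card_insert_of_notMem (by simp [hne]),
      card_singleton, hcu, if_pos hA, if_pos hB]
    rw [disjoint_right]
    intro p hp
    rcases mem_insert.mp hp with rfl | hp'
    · exact hlj
    · rw [mem_singleton] at hp'; subst hp'; exact hjr
  · have hgl : glue l j r T₁ T₂ = (T₁ ∪ T₂) ∪ {(l, j)} := by
      simp [glue, hA, hB]
    rw [hgl, card_union_of_disjoint (by simp [disjoint_singleton_right, hlj]), hcu,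
      card_singleton, if_pos hA, if_neg hB]
  · have hgl : glue l j r T₁ T₂ = (T₁ ∪ T₂) ∪ {(j, r)} := by
      simp [glue, hA, hB]
    rw [hgl, card_union_of_disjoint (by simp [disjoint_singleton_right, hjr]), hcu,
      card_singleton, if_neg hA, if_pos hB]
  · have hgl : glue l j r T₁ T₂ = T₁ ∪ T₂ := by
      simp [glue, hA, hB]
    rw [hgl, hcu, if_neg hA, if_neg hB]
    omega

lemma glue_noncross {l j r : ℕ} {T₁ T₂ : Finset (ℕ × ℕ)} (hj1 : l < j) (hj2 : j < r)
    (h1 : T₁ ⊆ allDiags l j) (h2 : T₂ ⊆ allDiags j r)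
    (hX1 : ∀ d ∈ T₁, ∀ e ∈ T₁, ¬ Crosses d.1 d.2 e.1 e.2)
    (hX2 : ∀ d ∈ T₂, ∀ e ∈ T₂, ¬ Crosses d.1 d.2 e.1 e.2) :
    ∀ d ∈ glue l j r T₁ T₂, ∀ e ∈ glue l j r T₁ T₂, ¬ Crosses d.1 d.2 e.1 e.2 := by
  have hb1 : ∀ p ∈ T₁, l ≤ p.1 ∧ p.1 + 2 ≤ p.2 ∧ p.2 ≤ j ∧ ¬(p.1 = l ∧ p.2 = j) :=
    fun p hp => mem_allDiags.mp (h1 hp)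
  have hb2 : ∀ p ∈ T₂, j ≤ p.1 ∧ p.1 + 2 ≤ p.2 ∧ p.2 ≤ r ∧ ¬(p.1 = j ∧ p.2 = r) :=
    fun p hp => mem_allDiags.mp (h2 hp)
  intro d hd e he
  rcases mem_glue.mp hd with hd' | hd' | ⟨hc, rfl⟩ | ⟨hc, rfl⟩ <;>
    rcases mem_glue.mp he with he' | he' | ⟨hc', rfl⟩ | ⟨hc', rfl⟩
  · exact hX1 d hd' e he'
  · have := hb1 d hd'; have := hb2 e he'; unfold Crosses; omega
  · have := hb1 d hd'; unfold Crosses; omega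
  · have := hb1 d hd'; unfold Crosses; omega
  · have := hb2 d hd'; have := hb1 e he'; unfold Crosses; omega
  · exact hX2 d hd' e he'
  · have := hb2 d hd'; unfold Crosses; omega
  · have := hb2 d hd'; unfold Crosses; omega
  · have := hb1 e he'; unfold Crosses; omega
  · have := hb2 e he'; unfold Crosses; omega
  · unfold Crosses; omega
  · unfold Crosses; omega
  · have := hb1 e he'; unfold Crosses; omega
  · have := hb2 e he'; unfold Crosses; omega
  · unfold Crosses; omega
  · unfold Crosses; omega

lemma glue_mem {l j r : ℕ} {T₁ T₂ : Finset (ℕ × ℕ)} (hj1 : l < j) (hj2 : j < r)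
    (hT1 : T₁ ∈ triangulations l j) (hT2 : T₂ ∈ triangulations j r) :
    glue l j r T₁ T₂ ∈ triangulations l r := by
  obtain ⟨h1, hc1, hX1⟩ := mem_triangulations.mp hT1
  obtain ⟨h2, hc2, hX2⟩ := mem_triangulations.mp hT2
  refine mem_triangulations.mpr ⟨glue_subset hj1 hj2 h1 h2, ?_,
    glue_noncross hj1 hj2 h1 h2 hX1 hX2⟩
  rw [glue_card hj1 hj2 h1 h2, hc1, hc2]
  by_cases hA : l + 2 ≤ j <;> by_cases hB : j + 2 ≤ r <;> simp [hA, hB] <;> omega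

lemma glue_side_lj {l j r : ℕ} {T₁ T₂ : Finset (ℕ × ℕ)} (hj1 : l < j) (hj2 : j < r) :
    IsSide l r (glue l j r T₁ T₂) l j := by
  by_cases hA : l + 2 ≤ j
  · exact Or.inr (mem_glue.mpr (Or.inr (Or.inr (Or.inl ⟨hA, rfl⟩))))
  · exact Or.inl (Or.inl ⟨le_refl l, by omega, by omega⟩)

lemma glue_side_jr {l j r : ℕ} {T₁ T₂ : Finset (ℕ × ℕ)} (hj1 : l < j) (hj2 : j < r) :
    IsSide l r (glue l j r T₁ T₂) j r := by
  by_cases hB : j + 2 ≤ r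
  · exact Or.inr (mem_glue.mpr (Or.inr (Or.inr (Or.inr ⟨hB, rfl⟩))))
  · exact Or.inl (Or.inl ⟨le_of_lt hj1, by omega, le_refl r⟩)

lemma glue_filter₁ {l j r : ℕ} {T₁ T₂ : Finset (ℕ × ℕ)} (hj1 : l < j) (hj2 : j < r)
    (h1 : T₁ ⊆ allDiags l j) (h2 : T₂ ⊆ allDiags j r) :
    (glue l j r T₁ T₂).filter (fun p => p.2 ≤ j ∧ ¬(p.1 = l ∧ p.2 = j)) = T₁ := by
  ext p
  rw [mem_filter, mem_glue]
  constructor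
  · rintro ⟨hp, hpj, hpw⟩
    rcases hp with h | h | ⟨hc, rfl⟩ | ⟨hc, rfl⟩
    · exact h
    · have := mem_allDiags.mp (h2 h); unfold IsDiag at this; omega
    · simp at hpw
    · simp at hpj; omega
  · intro h
    have := mem_allDiags.mp (h1 h)
    unfold IsDiag at this
    exact ⟨Or.inl h, by omega, by omega⟩

lemma glue_filter₂ {l j r : ℕ} {T₁ T₂ : Finset (ℕ × ℕ)} (hj1 : l < j) (hj2 : j < r)
    (h1 : T₁ ⊆ allDiags l j) (h2 : T₂ ⊆ allDiags j r) :
    (glue l j r T₁ T₂).filter (fun p => j ≤ p.1 ∧ ¬(p.1 = j ∧ p.2 = r)) = T₂ := by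
  ext p
  rw [mem_filter, mem_glue]
  constructor
  · rintro ⟨hp, hpj, hpw⟩
    rcases hp with h | h | ⟨hc, rfl⟩ | ⟨hc, rfl⟩
    · have := mem_allDiags.mp (h1 h); unfold IsDiag at this; omega
    · exact h
    · simp at hpj; omega
    · simp at hpw
  · intro h
    have := mem_allDiags.mp (h2 h)
    unfold IsDiag at this
    exact ⟨Or.inr (Or.inl h), by omega, by omega⟩

lemma decomp {l r : ℕ} {T : Finset (ℕ × ℕ)} (hT : T ∈ triangulations l r)
    (h2 : l + 2 ≤ r) :
    ∃ j, l < j ∧ j < r ∧ ∃ T₁ ∈ triangulations l j, ∃ T₂ ∈ triangulations j r,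
      T = glue l j r T₁ T₂ := by
  obtain ⟨j, hj1, hj2, hs1, hs2⟩ := ear_exists hT h2
  obtain ⟨hsub, hcard, hX⟩ := mem_triangulations.mp hT
  set T₁ := T.filter (fun p => p.2 ≤ j ∧ ¬(p.1 = l ∧ p.2 = j)) with hT1
  set T₂ := T.filter (fun p => j ≤ p.1 ∧ ¬(p.1 = j ∧ p.2 = r)) with hT2
  have hbT : ∀ p ∈ T, l ≤ p.1 ∧ p.1 + 2 ≤ p.2 ∧ p.2 ≤ r ∧ ¬(p.1 = l ∧ p.2 = r) :=
    fun p hp => mem_allDiags.mp (hsub hp)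
  -- the two halves are sub-triangulation candidates
  have hsub1 : T₁ ⊆ allDiags l j := by
    intro p hp
    rw [hT1, mem_filter] at hp
    have := hbT p hp.1
    rw [mem_allDiags]
    unfold IsDiag
    omega
  have hsub2 : T₂ ⊆ allDiags j r := by
    intro p hp
    rw [hT2, mem_filter] at hp
    have := hbT p hp.1
    rw [mem_allDiags]
    unfold IsDiag
    omega
  -- key membership facts
  have hmemlj : l + 2 ≤ j → (l, j) ∈ T := by
    intro hA
    rcases hs1 with hE | h
    · exfalso; unfold IsEdge at hE; omega
    · exact h
  have hmemjr : j + 2 ≤ r → (j, r) ∈ T := by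
    intro hB
    rcases hs2 with hE | h
    · exfalso; unfold IsEdge at hE; omega
    · exact h
  -- T equals the glue
  have heq : T = glue l j r T₁ T₂ := by
    ext p
    rw [mem_glue]
    constructor
    · intro hp
      have hpb := hbT p hp
      by_cases hA : p = (l, j)
      · refine Or.inr (Or.inr (Or.inl ⟨?_, hA⟩))
        subst hA; simp at hpb; omega
      by_cases hB : p = (j, r)
      · refine Or.inr (Or.inr (Or.inr ⟨?_, hB⟩))
        subst hB; simp at hpb; omega
      have hApw : ¬(p.1 = l ∧ p.2 = j) := fun h => hA (Prod.ext_iff.mpr h)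
      have hBpw : ¬(p.1 = j ∧ p.2 = r) := fun h => hB (Prod.ext_iff.mpr h)
      have hkey : p.2 ≤ j ∨ j ≤ p.1 := by
        by_contra hc
        push_neg at hc
        obtain ⟨hc1, hc2⟩ := hc
        -- p.1 < j < p.2 : p crosses one of the two ear sides
        by_cases hpl : p.1 = l
        · -- p = (l, p.2) with j < p.2 < r crosses (j, r)
          have hp2r : p.2 < r := by omega
          have hjrT : (j, r) ∈ T := by
            apply hmemjr; omega
          have := hX p hp (j, r) hjrT
          unfold Crosses at this
          omega
        · have hljT : (l, j) ∈ T := by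
            apply hmemlj; omega
          have := hX (l, j) hljT p hp
          unfold Crosses at this
          omega
      rcases hkey with hk | hk
      · exact Or.inl (mem_filter.mpr ⟨hp, hk, hApw⟩)
      · exact Or.inr (Or.inl (mem_filter.mpr ⟨hp, hk, hBpw⟩))
    · rintro (h | h | ⟨hc, rfl⟩ | ⟨hc, rfl⟩)
      · exact filter_subset _ _ h
      · exact filter_subset _ _ h
      · exact hmemlj hc
      · exact hmemjr hc
  -- cardinalities are forced
  have hX1 : ∀ d ∈ T₁, ∀ e ∈ T₁, ¬ Crosses d.1 d.2 e.1 e.2 :=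
    fun d hd e he => hX d (filter_subset _ _ hd) e (filter_subset _ _ he)
  have hX2 : ∀ d ∈ T₂, ∀ e ∈ T₂, ¬ Crosses d.1 d.2 e.1 e.2 :=
    fun d hd e he => hX d (filter_subset _ _ hd) e (filter_subset _ _ he)
  have hle1 : T₁.card ≤ j - l - 2 :=
    noncross_card_le (j - l) l j T₁ (le_refl _) hsub1 hX1
  have hle2 : T₂.card ≤ r - j - 2 :=
    noncross_card_le (r - j) j r T₂ (le_refl _) hsub2 hX2
  have hgc : T.card = T₁.card + T₂.card + (if l + 2 ≤ j then 1 else 0) +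
      (if j + 2 ≤ r then 1 else 0) := by
    rw [heq]; exact glue_card hj1 hj2 hsub1 hsub2
  have hcards : T₁.card = j - l - 2 ∧ T₂.card = r - j - 2 := by
    by_cases hA : l + 2 ≤ j <;> by_cases hB : j + 2 ≤ r <;>
      simp [hA, hB] at hgc <;> omega
  exact ⟨j, hj1, hj2, T₁, mem_triangulations.mpr ⟨hsub1, hcards.1, hX1⟩,
    T₂, mem_triangulations.mpr ⟨hsub2, hcards.2, hX2⟩, heq⟩

lemma triang_small {l r : ℕ} (h : r ≤ l + 2) (h' : l < r) : triangulations l r = {∅} := by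
  ext T
  simp only [mem_triangulations, mem_singleton]
  constructor
  · rintro ⟨hsub, -, -⟩
    rw [allDiags_eq_empty h] at hsub
    exact subset_empty.mp hsub
  · rintro rfl
    refine ⟨by simp, by simp; omega, by simp⟩

lemma triang_biUnion {l r : ℕ} (h2 : l + 2 ≤ r) :
    triangulations l r = (Ioo l r).biUnion (fun j =>
      ((triangulations l j) ×ˢ (triangulations j r)).image (fun q => glue l j r q.1 q.2)) := by
  ext T
  simp only [mem_biUnion, mem_Ioo, mem_image, mem_product]
  constructor
  · intro hT
    obtain ⟨j, hj1, hj2, T₁, h1, T₂, hh2, heq⟩ := decomp hT h2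
    exact ⟨j, ⟨hj1, hj2⟩, (T₁, T₂), ⟨h1, hh2⟩, heq.symm⟩
  · rintro ⟨j, ⟨hj1, hj2⟩, ⟨T₁, T₂⟩, ⟨ha1, ha2⟩, rfl⟩
    exact glue_mem hj1 hj2 ha1 ha2

lemma glue_inj {l j r : ℕ} (hj1 : l < j) (hj2 : j < r) :
    ∀ q ∈ (triangulations l j) ×ˢ (triangulations j r),
    ∀ q' ∈ (triangulations l j) ×ˢ (triangulations j r),
      glue l j r q.1 q.2 = glue l j r q'.1 q'.2 → q = q' := by
  rintro ⟨T₁, T₂⟩ hq ⟨T₁', T₂'⟩ hq' heq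
  rw [mem_product] at hq hq'
  dsimp only at hq hq' heq
  have h1 := (mem_triangulations.mp hq.1).1
  have h2 := (mem_triangulations.mp hq.2).1
  have h1' := (mem_triangulations.mp hq'.1).1
  have h2' := (mem_triangulations.mp hq'.2).1
  have e1 : T₁ = T₁' := by
    rw [← glue_filter₁ hj1 hj2 h1 h2, ← glue_filter₁ hj1 hj2 h1' h2', heq]
  have e2 : T₂ = T₂' := by
    rw [← glue_filter₂ hj1 hj2 h1 h2, ← glue_filter₂ hj1 hj2 h1' h2', heq]
  simp [e1, e2]

lemma catalan_succ_range (m : ℕ) :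
    catalan (m + 1) = ∑ i ∈ range (m + 1), catalan i * catalan (m - i) := by
  rw [catalan_succ, ← Fin.sum_univ_eq_sum_range]

lemma card_triang : ∀ k l r, r - l ≤ k → l < r →
    (triangulations l r).card = catalan (r - l - 1) := by
  intro k
  induction k using Nat.strong_induction_on with
  | _ k ih =>
  intro l r hk hlr
  by_cases hsm : r ≤ l + 2
  · rw [triang_small hsm hlr, card_singleton]
    have : r - l - 1 ≤ 1 := by omega
    interval_cases h : r - l - 1
    · simp [catalan_zero]
    · simp [catalan_one]
  push_neg at hsm
  have h2 : l + 2 ≤ r := by omega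
  rw [triang_biUnion h2, card_biUnion]
  · have hterm : ∀ j ∈ Ioo l r,
        (((triangulations l j) ×ˢ (triangulations j r)).image
          (fun q => glue l j r q.1 q.2)).card = catalan (j - l - 1) * catalan (r - j - 1) := by
      intro j hj
      rw [mem_Ioo] at hj
      rw [card_image_of_injOn (glue_inj hj.1 hj.2), card_product]
      rw [ih (j - l) (by omega) l j (le_refl _) hj.1, ih (r - j) (by omega) j r (le_refl _) hj.2]
    rw [sum_congr rfl hterm]
    -- reindex
    obtain ⟨m, rfl⟩ : ∃ m, r = l + 2 + m := ⟨r - l - 2, by omega⟩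
    have : l + 2 + m - l - 1 = m + 1 := by omega
    rw [this, catalan_succ_range]
    refine Finset.sum_nbij' (i := fun j => j - (l + 1)) (j := fun i => l + 1 + i)
      ?_ ?_ ?_ ?_ ?_
    · intro a ha; rw [mem_Ioo] at ha
      show a - (l + 1) ∈ range (m + 1); rw [mem_range]; omega
    · intro a ha; rw [mem_range] at ha
      show l + 1 + a ∈ Ioo l (l + 2 + m); rw [mem_Ioo]; omega
    · intro a ha; rw [mem_Ioo] at ha
      show l + 1 + (a - (l + 1)) = a; omega
    · intro a ha; rw [mem_range] at ha
      show l + 1 + a - (l + 1) = a; omega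
    · intro a ha
      rw [mem_Ioo] at ha
      have e1 : a - l - 1 = a - (l + 1) := by omega
      have e2 : l + 2 + m - a - 1 = m - (a - (l + 1)) := by omega
      rw [e1, e2]
  · -- disjointness
    intro j hj j' hj' hne
    rw [mem_coe, mem_Ioo] at hj hj'
    simp only [Function.onFun]
    rw [disjoint_left]
    intro T hTj hTj'
    rw [mem_image] at hTj hTj'
    obtain ⟨q, hq, rfl⟩ := hTj
    obtain ⟨q', hq', heq⟩ := hTj'
    rw [mem_product] at hq hq'
    have hmem : glue l j r q.1 q.2 ∈ triangulations l r := glue_mem hj.1 hj.2 hq.1 hq.2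
    apply hne
    refine ear_unique hmem hj.1 hj.2 (glue_side_lj hj.1 hj.2) (glue_side_jr hj.1 hj.2)
      hj'.1 hj'.2 ?_ ?_
    · rw [← heq]; exact glue_side_lj hj'.1 hj'.2
    · rw [← heq]; exact glue_side_jr hj'.1 hj'.2

lemma side_bnd {l r : ℕ} {T : Finset (ℕ × ℕ)} (hsub : T ⊆ allDiags l r) {a b : ℕ}
    (h : IsSide l r T a b) : l ≤ a ∧ b ≤ r := by
  rcases h with hE | hm
  · unfold IsEdge at hE; omega
  · have := mem_allDiags.mp (hsub hm); unfold IsDiag at this; omega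

lemma side_up_left {l j r : ℕ} {T₁ T₂ : Finset (ℕ × ℕ)} (hj1 : l < j) (hj2 : j < r)
    {a b : ℕ} (hab : a < b) (h : IsSide l j T₁ a b) :
    IsSide l r (glue l j r T₁ T₂) a b := by
  rcases h with hE | hm
  · rcases hE with ⟨e1, e2, e3⟩ | ⟨e1, e2⟩
    · exact Or.inl (Or.inl ⟨e1, e2, by omega⟩)
    · by_cases hA : l + 2 ≤ j
      · refine Or.inr (mem_glue.mpr (Or.inr (Or.inr (Or.inl ⟨hA, ?_⟩))))
        rw [Prod.mk.injEq]; exact ⟨e1, e2⟩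
      · exact Or.inl (Or.inl ⟨by omega, by omega, by omega⟩)
  · exact Or.inr (mem_glue.mpr (Or.inl hm))

lemma side_up_right {l j r : ℕ} {T₁ T₂ : Finset (ℕ × ℕ)} (hj1 : l < j) (hj2 : j < r)
    {a b : ℕ} (hab : a < b) (h : IsSide j r T₂ a b) :
    IsSide l r (glue l j r T₁ T₂) a b := by
  rcases h with hE | hm
  · rcases hE with ⟨e1, e2, e3⟩ | ⟨e1, e2⟩
    · exact Or.inl (Or.inl ⟨by omega, e2, e3⟩)
    · by_cases hB : j + 2 ≤ r
      · refine Or.inr (mem_glue.mpr (Or.inr (Or.inr (Or.inr ⟨hB, ?_⟩))))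
        rw [Prod.mk.injEq]; exact ⟨e1, e2⟩
      · exact Or.inl (Or.inl ⟨by omega, by omega, by omega⟩)
  · exact Or.inr (mem_glue.mpr (Or.inr (Or.inl hm)))

lemma side_down_left {l j r : ℕ} {T₁ T₂ : Finset (ℕ × ℕ)} (hj1 : l < j) (hj2 : j < r)
    (h1 : T₁ ⊆ allDiags l j) (h2 : T₂ ⊆ allDiags j r) {a b : ℕ} (hb : b ≤ j)
    (h : IsSide l r (glue l j r T₁ T₂) a b) : IsSide l j T₁ a b := by
  rcases h with hE | hm
  · rcases hE with ⟨e1, e2, e3⟩ | ⟨e1, e2⟩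
    · exact Or.inl (Or.inl ⟨e1, e2, hb⟩)
    · exfalso; omega
  · rcases mem_glue.mp hm with h | h | ⟨hc, hp⟩ | ⟨hc, hp⟩
    · exact Or.inr h
    · exfalso; have := mem_allDiags.mp (h2 h); unfold IsDiag at this; simp at this; omega
    · rw [Prod.mk.injEq] at hp
      exact Or.inl (Or.inr ⟨hp.1, hp.2⟩)
    · exfalso; rw [Prod.mk.injEq] at hp; omega

lemma side_down_right {l j r : ℕ} {T₁ T₂ : Finset (ℕ × ℕ)} (hj1 : l < j) (hj2 : j < r)
    (h1 : T₁ ⊆ allDiags l j) (h2 : T₂ ⊆ allDiags j r) {a b : ℕ} (ha : j ≤ a)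
    (h : IsSide l r (glue l j r T₁ T₂) a b) : IsSide j r T₂ a b := by
  rcases h with hE | hm
  · rcases hE with ⟨e1, e2, e3⟩ | ⟨e1, e2⟩
    · exact Or.inl (Or.inl ⟨ha, e2, e3⟩)
    · exfalso; omega
  · rcases mem_glue.mp hm with h | h | ⟨hc, hp⟩ | ⟨hc, hp⟩
    · exfalso; have := mem_allDiags.mp (h1 h); unfold IsDiag at this; simp at this; omega
    · exact Or.inr h
    · exfalso; rw [Prod.mk.injEq] at hp; omega
    · rw [Prod.mk.injEq] at hp
      exact Or.inl (Or.inr ⟨hp.1, hp.2⟩)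

lemma triangles_glue {l j r : ℕ} {T₁ T₂ : Finset (ℕ × ℕ)} (hj1 : l < j) (hj2 : j < r)
    (h1 : T₁ ⊆ allDiags l j) (h2 : T₂ ⊆ allDiags j r) :
    triangles l r (glue l j r T₁ T₂) =
      triangles l j T₁ ∪ triangles j r T₂ ∪ {(l, j, r)} := by
  ext t
  obtain ⟨a, b, c⟩ := t
  simp only [mem_union, mem_singleton, mem_triangles]
  constructor
  · rintro ⟨hr1, hr2, hr3, hab, hbc, hs1, hs2, hs3⟩
    by_cases hcj : c ≤ j
    · left; left
      exact ⟨by omega, by omega, by omega, hab, hbc,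
        side_down_left hj1 hj2 h1 h2 (by omega) hs1,
        side_down_left hj1 hj2 h1 h2 hcj hs2,
        side_down_left hj1 hj2 h1 h2 hcj hs3⟩
    by_cases haj : j ≤ a
    · left; right
      exact ⟨by omega, by omega, by omega, hab, hbc,
        side_down_right hj1 hj2 h1 h2 haj hs1,
        side_down_right hj1 hj2 h1 h2 (by omega) hs2,
        side_down_right hj1 hj2 h1 h2 haj hs3⟩
    push_neg at hcj haj
    have key : a = l ∧ c = r := by
      rcases hs3 with hE | hm
      · rcases hE with ⟨e1, e2, e3⟩ | ⟨e1, e2⟩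
        · exfalso; omega
        · exact ⟨e1, e2⟩
      · exfalso
        rcases mem_glue.mp hm with h | h | ⟨hc', hp⟩ | ⟨hc', hp⟩
        · have := mem_allDiags.mp (h1 h); unfold IsDiag at this; simp at this; omega
        · have := mem_allDiags.mp (h2 h); unfold IsDiag at this; simp at this; omega
        · rw [Prod.mk.injEq] at hp; omega
        · rw [Prod.mk.injEq] at hp; omega
    obtain ⟨rfl, rfl⟩ := key
    right
    rcases lt_trichotomy b j with hbj | rfl | hbj
    · exfalso
      rcases hs2 with hE | hm
      · unfold IsEdge at hE; omega
      · rcases mem_glue.mp hm with h | h | ⟨hc', hp⟩ | ⟨hc', hp⟩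
        · have := mem_allDiags.mp (h1 h); unfold IsDiag at this; simp at this; omega
        · have := mem_allDiags.mp (h2 h); unfold IsDiag at this; simp at this; omega
        · rw [Prod.mk.injEq] at hp; omega
        · rw [Prod.mk.injEq] at hp; omega
    · rfl
    · exfalso
      rcases hs1 with hE | hm
      · unfold IsEdge at hE; omega
      · rcases mem_glue.mp hm with h | h | ⟨hc', hp⟩ | ⟨hc', hp⟩
        · have := mem_allDiags.mp (h1 h); unfold IsDiag at this; simp at this; omega
        · have := mem_allDiags.mp (h2 h); unfold IsDiag at this; simp at this; omega
        · rw [Prod.mk.injEq] at hp; omega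
        · rw [Prod.mk.injEq] at hp; omega
  · rintro ((h | h) | h)
    · obtain ⟨hr1, hr2, hr3, hab, hbc, hs1, hs2, hs3⟩ := h
      exact ⟨by omega, by omega, by omega, hab, hbc,
        side_up_left hj1 hj2 hab hs1,
        side_up_left hj1 hj2 hbc hs2,
        side_up_left hj1 hj2 (by omega) hs3⟩
    · obtain ⟨hr1, hr2, hr3, hab, hbc, hs1, hs2, hs3⟩ := h
      exact ⟨by omega, by omega, by omega, hab, hbc,
        side_up_right hj1 hj2 hab hs1,
        side_up_right hj1 hj2 hbc hs2,
        side_up_right hj1 hj2 (by omega) hs3⟩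
    · rw [Prod.mk.injEq, Prod.mk.injEq] at h
      obtain ⟨rfl, rfl, rfl⟩ := h
      exact ⟨by omega, by omega, by omega, hj1, hj2,
        glue_side_lj hj1 hj2, glue_side_jr hj1 hj2, Or.inl (Or.inr ⟨rfl, rfl⟩)⟩

noncomputable def bCnt (l r : ℕ) (T : Finset (ℕ × ℕ)) : ℕ :=
  ((triangles l r T).filter fun t => t.2.1 - t.1 = 1).card

noncomputable def rCnt (l r : ℕ) (T : Finset (ℕ × ℕ)) : ℕ :=
  ((triangles l r T).filter fun t => t.2.2 - t.2.1 = 1).card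

lemma triangles_small (l : ℕ) : triangles l (l + 1) ∅ = ∅ := by
  ext t
  simp only [mem_triangles, notMem_empty, iff_false, not_and]
  intro hr1 hr2 hr3 hab hbc hs1 hs2
  intro hs3
  have b1 := side_bnd (empty_subset (allDiags l (l + 1))) hs1
  have b2 := side_bnd (empty_subset (allDiags l (l + 1))) hs2
  omega

lemma tri_fst_ge {j r : ℕ} {T : Finset (ℕ × ℕ)} (hsub : T ⊆ allDiags j r)
    {t : ℕ × ℕ × ℕ} (ht : t ∈ triangles j r T) : j ≤ t.1 := by
  obtain ⟨_, _, _, _, _, hs1, _, _⟩ := mem_triangles.mp ht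
  exact (side_bnd hsub hs1).1

lemma tri_disj₁₂ {l j r : ℕ} {T₁ T₂ : Finset (ℕ × ℕ)} (hj1 : l < j)
    (h1 : T₁ ⊆ allDiags l j) (h2 : T₂ ⊆ allDiags j r) :
    Disjoint (triangles l j T₁) (triangles j r T₂) := by
  rw [disjoint_left]
  intro t ht1 ht2
  have hle := tri_fst_ge h2 ht2
  obtain ⟨hr1, _, _, _, _, _, _, _⟩ := mem_triangles.mp ht1
  omega

lemma tri_disj_sing {l j r : ℕ} {T₁ T₂ : Finset (ℕ × ℕ)} (hj1 : l < j) (hj2 : j < r)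
    (h1 : T₁ ⊆ allDiags l j) (h2 : T₂ ⊆ allDiags j r) :
    Disjoint (triangles l j T₁ ∪ triangles j r T₂) ({(l, j, r)} : Finset (ℕ × ℕ × ℕ)) := by
  rw [disjoint_right]
  intro t ht hmem
  rw [mem_singleton] at ht
  subst ht
  rcases mem_union.mp hmem with h | h
  · obtain ⟨_, _, hr3, _, _, _, _, _⟩ := mem_triangles.mp h
    simp at hr3; omega
  · have := tri_fst_ge h2 h
    simp at this; omega

lemma filter_card_glue {l j r : ℕ} {T₁ T₂ : Finset (ℕ × ℕ)} (hj1 : l < j) (hj2 : j < r)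
    (h1 : T₁ ⊆ allDiags l j) (h2 : T₂ ⊆ allDiags j r) (P : ℕ × ℕ × ℕ → Prop) [DecidablePred P] :
    ((triangles l r (glue l j r T₁ T₂)).filter P).card =
      ((triangles l j T₁).filter P).card + ((triangles j r T₂).filter P).card +
        (if P (l, j, r) then 1 else 0) := by
  have hd12 : Disjoint ((triangles l j T₁).filter P) ((triangles j r T₂).filter P) :=
    disjoint_filter_filter (tri_disj₁₂ hj1 h1 h2)
  have hds : Disjoint ((triangles l j T₁).filter P ∪ (triangles j r T₂).filter P)
      (({(l, j, r)} : Finset (ℕ × ℕ × ℕ)).filter P) := by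
    rw [← filter_union]
    exact disjoint_filter_filter (tri_disj_sing hj1 hj2 h1 h2)
  rw [triangles_glue hj1 hj2 h1 h2, filter_union, filter_union,
    card_union_of_disjoint hds, card_union_of_disjoint hd12, filter_singleton]
  split <;> simp

lemma F_eq : ∀ k l r, r - l ≤ k → l + 2 ≤ r →
    ∀ T ∈ triangulations l r, bCnt l r T + rCnt l r T = r - l := by
  intro k
  induction k using Nat.strong_induction_on with
  | _ k ih =>
  intro l r hk h2 T hT
  obtain ⟨j, hj1, hj2, T₁, hT1, T₂, hT2, heq⟩ := decomp hT h2
  have h1sub := (mem_triangulations.mp hT1).1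
  have h2sub := (mem_triangulations.mp hT2).1
  have hb : bCnt l r T = bCnt l j T₁ + bCnt j r T₂ + (if j - l = 1 then 1 else 0) := by
    rw [bCnt, heq]
    exact filter_card_glue hj1 hj2 h1sub h2sub _
  have hr : rCnt l r T = rCnt l j T₁ + rCnt j r T₂ + (if r - j = 1 then 1 else 0) := by
    rw [rCnt, heq]
    exact filter_card_glue hj1 hj2 h1sub h2sub _
  have hF1 : bCnt l j T₁ + rCnt l j T₁ = (if j = l + 1 then 0 else j - l) := by
    by_cases hA : l + 2 ≤ j
    · rw [if_neg (by omega)]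
      exact ih (j - l) (by omega) l j (le_refl _) hA T₁ hT1
    · rw [if_pos (by omega)]
      have hj : j = l + 1 := by omega
      subst hj
      have hTe : T₁ = ∅ := by
        rw [triang_small (by omega) (by omega)] at hT1
        exact mem_singleton.mp hT1
      rw [hTe, bCnt, rCnt, triangles_small, filter_empty, filter_empty]
      simp
  have hF2 : bCnt j r T₂ + rCnt j r T₂ = (if r = j + 1 then 0 else r - j) := by
    by_cases hB : j + 2 ≤ r
    · rw [if_neg (by omega)]
      exact ih (r - j) (by omega) j r (le_refl _) hB T₂ hT2
    · rw [if_pos (by omega)]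
      have hj : r = j + 1 := by omega
      subst hj
      have hTe : T₂ = ∅ := by
        rw [triang_small (by omega) (by omega)] at hT2
        exact mem_singleton.mp hT2
      rw [hTe, bCnt, rCnt, triangles_small, filter_empty, filter_empty]
      simp
  rw [hb, hr]
  by_cases hA : j = l + 1 <;> by_cases hB : r = j + 1
  · rw [if_pos (show j - l = 1 by omega), if_pos (show r - j = 1 by omega)]
    rw [if_pos hA] at hF1; rw [if_pos hB] at hF2; omega
  · rw [if_pos (show j - l = 1 by omega), if_neg (show ¬ r - j = 1 by omega)]
    rw [if_pos hA] at hF1; rw [if_neg hB] at hF2; omega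
  · rw [if_neg (show ¬ j - l = 1 by omega), if_pos (show r - j = 1 by omega)]
    rw [if_neg hA] at hF1; rw [if_pos hB] at hF2; omega
  · rw [if_neg (show ¬ j - l = 1 by omega), if_neg (show ¬ r - j = 1 by omega)]
    rw [if_neg hA] at hF1; rw [if_neg hB] at hF2; omega

noncomputable def rT (n : ℕ) (T : Finset (ℕ × ℕ)) : Finset (ℕ × ℕ) :=
  T.image (fun p => (n + 1 - p.2, n + 1 - p.1))

lemma rT_subset {n : ℕ} {T : Finset (ℕ × ℕ)} (hT : T ⊆ allDiags 1 n) :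
    rT n T ⊆ allDiags 1 n := by
  intro p hp
  rw [rT, mem_image] at hp
  obtain ⟨q, hq, rfl⟩ := hp
  have := mem_allDiags.mp (hT hq)
  rw [mem_allDiags]
  unfold IsDiag at this ⊢
  dsimp only
  omega

lemma rT_invol {n : ℕ} {T : Finset (ℕ × ℕ)} (hT : T ⊆ allDiags 1 n) :
    rT n (rT n T) = T := by
  rw [rT, rT, Finset.image_image]
  have : ∀ p ∈ T, ((fun p : ℕ × ℕ => (n + 1 - p.2, n + 1 - p.1)) ∘
      (fun p : ℕ × ℕ => (n + 1 - p.2, n + 1 - p.1))) p = id p := by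
    intro p hp
    have := mem_allDiags.mp (hT hp)
    unfold IsDiag at this
    simp only [Function.comp_apply, id_eq]
    rw [Prod.ext_iff]
    dsimp only
    omega
  rw [Finset.image_congr this, Finset.image_id]

lemma rT_mem_triang {n : ℕ} {T : Finset (ℕ × ℕ)} (hT : T ∈ triangulations 1 n) :
    rT n T ∈ triangulations 1 n := by
  obtain ⟨hsub, hcard, hX⟩ := mem_triangulations.mp hT
  refine mem_triangulations.mpr ⟨rT_subset hsub, ?_, ?_⟩
  · rw [rT, card_image_of_injOn, hcard]
    intro p hp q hq hpq
    have h1 := mem_allDiags.mp (hsub hp)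
    have h2 := mem_allDiags.mp (hsub hq)
    unfold IsDiag at h1 h2
    rw [Prod.ext_iff] at hpq ⊢
    dsimp only at hpq
    omega
  · intro d hd e he
    rw [rT, mem_image] at hd he
    obtain ⟨p, hp, rfl⟩ := hd
    obtain ⟨q, hq, rfl⟩ := he
    have h1 := mem_allDiags.mp (hsub hp)
    have h2 := mem_allDiags.mp (hsub hq)
    have h3 := hX p hp q hq
    unfold IsDiag at h1 h2
    unfold Crosses at h3 ⊢
    dsimp only
    omega

lemma refl_side {n : ℕ} {T : Finset (ℕ × ℕ)} {a b : ℕ}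
    (h1a : 1 ≤ a) (hab : a < b) (hb : b ≤ n) (h : IsSide 1 n T a b) :
    IsSide 1 n (rT n T) (n + 1 - b) (n + 1 - a) := by
  rcases h with hE | hm
  · left
    unfold IsEdge at hE ⊢
    omega
  · right
    rw [rT, mem_image]
    exact ⟨(a, b), hm, rfl⟩

lemma tri_bounds {n : ℕ} {T : Finset (ℕ × ℕ)} (hsub : T ⊆ allDiags 1 n)
    {t : ℕ × ℕ × ℕ} (ht : t ∈ triangles 1 n T) :
    1 ≤ t.1 ∧ t.1 < t.2.1 ∧ t.2.1 < t.2.2 ∧ t.2.2 ≤ n := by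
  obtain ⟨_, _, _, hab, hbc, hs1, hs2, hs3⟩ := mem_triangles.mp ht
  have b1 := side_bnd hsub hs1
  have b2 := side_bnd hsub hs2
  omega

lemma refl_tri {n : ℕ} {T : Finset (ℕ × ℕ)} (hsub : T ⊆ allDiags 1 n)
    {t : ℕ × ℕ × ℕ} (ht : t ∈ triangles 1 n T) :
    (n + 1 - t.2.2, n + 1 - t.2.1, n + 1 - t.1) ∈ triangles 1 n (rT n T) := by
  have hb := tri_bounds hsub ht
  obtain ⟨_, _, _, hab, hbc, hs1, hs2, hs3⟩ := mem_triangles.mp ht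
  refine mem_triangles.mpr ⟨by dsimp only; omega, by dsimp only; omega, by dsimp only; omega,
    by dsimp only; omega, by dsimp only; omega, ?_, ?_, ?_⟩
  · exact refl_side (by omega) (by omega) (by omega) hs2
  · exact refl_side (by omega) (by omega) (by omega) hs1
  · exact refl_side (by omega) (by omega) (by omega) hs3

lemma bCnt_eq_rCnt {n : ℕ} {T : Finset (ℕ × ℕ)} (hT : T ∈ triangulations 1 n) :
    bCnt 1 n T = rCnt 1 n (rT n T) := by
  obtain ⟨hsub, hcard, hX⟩ := mem_triangulations.mp hT
  have hsub' : rT n T ⊆ allDiags 1 n := rT_subset hsub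
  rw [bCnt, rCnt]
  refine card_nbij' (i := fun t => (n + 1 - t.2.2, n + 1 - t.2.1, n + 1 - t.1))
    (j := fun t => (n + 1 - t.2.2, n + 1 - t.2.1, n + 1 - t.1)) ?_ ?_ ?_ ?_
  · intro t ht
    rw [mem_coe, mem_filter] at ht ⊢
    have hb := tri_bounds hsub ht.1
    have hp := ht.2
    exact ⟨refl_tri hsub ht.1, by dsimp only; omega⟩
  · intro t ht
    rw [mem_coe, mem_filter] at ht ⊢
    have hb := tri_bounds hsub' ht.1
    have hmem := refl_tri hsub' ht.1
    rw [rT_invol hsub] at hmem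
    have hp := ht.2
    exact ⟨hmem, by dsimp only; omega⟩
  · intro t ht
    rw [mem_coe, mem_filter] at ht
    have hb := tri_bounds hsub ht.1
    obtain ⟨a, b, c⟩ := t
    dsimp only at hb ⊢
    rw [Prod.ext_iff, Prod.ext_iff]
    dsimp only
    omega
  · intro t ht
    rw [mem_coe, mem_filter] at ht
    have hb := tri_bounds hsub' ht.1
    obtain ⟨a, b, c⟩ := t
    dsimp only at hb ⊢
    rw [Prod.ext_iff, Prod.ext_iff]
    dsimp only
    omega

lemma sum_bCnt_eq_sum_rCnt (n : ℕ) :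
    ∑ T ∈ triangulations 1 n, bCnt 1 n T = ∑ T ∈ triangulations 1 n, rCnt 1 n T := by
  refine sum_nbij' (i := rT n) (j := rT n) ?_ ?_ ?_ ?_ ?_
  · intro T hT; exact rT_mem_triang hT
  · intro T hT; exact rT_mem_triang hT
  · intro T hT; exact rT_invol (mem_triangulations.mp hT).1
  · intro T hT; exact rT_invol (mem_triangulations.mp hT).1
  · intro T hT; exact bCnt_eq_rCnt hT

theorem blue_expectation' (n : ℕ) (hn : 3 ≤ n) :
    2 * ∑ T ∈ triangulations 1 n, bCnt 1 n T = (n - 1) * catalan (n - 2) := by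
  rw [two_mul]
  nth_rewrite 2 [sum_bCnt_eq_sum_rCnt n]
  rw [← sum_add_distrib]
  have h2 : ∀ T ∈ triangulations 1 n, bCnt 1 n T + rCnt 1 n T = n - 1 := by
    intro T hT
    have := F_eq (n - 1) 1 n (by omega) (by omega) T hT
    omega
  rw [sum_congr rfl h2, sum_const, smul_eq_mul,
    card_triang (n - 1) 1 n (by omega) (by omega)]
  have h3 : n - 1 - 1 = n - 2 := by omega
  rw [h3, mul_comm]

/-- the expected number of triangles `{l, j, r}`, `l < j < r`, with
`j - l = 1` is `(n-1)/2` (Theorem 3(2)). -/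
theorem blue_expectation (n : ℕ) (hn : 3 ≤ n) :
    2 * ∑ T ∈ triangulations 1 n, blueCount n T = (n - 1) * catalan (n - 2) := by
  have h : ∑ T ∈ triangulations 1 n, blueCount n T = ∑ T ∈ triangulations 1 n, bCnt 1 n T :=
    sum_congr rfl (fun T _ => rfl)
  rw [h]
  exact blue_expectation' n hn
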